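/- Let V be a real vector space, let I : V → V be a linear map, and let Q : V* → V be a linear map. Define 𝕁_{I,Q} : V × V* → V × V* by 𝕁_{I,Q}(x, ξ) = (-Ix + Qξ, ξ ∘ I). Then 𝕁_{I,Q} is a linear generalized complex structure on V (i.e., 𝕁_{I,Q} ∘ 𝕁_{I,Q} = -id and 𝕁_{I,Q} preserves the natural pairing) if and only if: I ∘ I = -id, I ∘ Q = Q ∘ I* (where I* ξ = ξ ∘ I), and Q is skew (ξ(Qη) = -η(Qξ) for all ξ, η ∈ V*). -/
import Mathlib


/-- The block upper-triangular map `𝕁_{I,Q} : (x, ξ) ↦ (-Ix + Qξ, ξ ∘ I)`. -/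
def Jblock {V : Type*} [AddCommGroup V] [Module ℝ V]
    (I : V →ₗ[ℝ] V) (Q : Module.Dual ℝ V →ₗ[ℝ] V) (p : V × Module.Dual ℝ V) :
    V × Module.Dual ℝ V :=
  (-(I p.1) + Q p.2, LinearMap.comp p.2 I)

/-- The natural pairing `⟨(x, ξ), (y, η)⟩ = ξ(y) + η(x)` on `V × V*`. -/
def natPairing {V : Type*} [AddCommGroup V] [Module ℝ V]
    (p q : V × Module.Dual ℝ V) : ℝ :=
  p.2 q.1 + q.2 p.1

theorem Jblock_gcs_iff
    {V : Type*} [AddCommGroup V] [Module ℝ V]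
    (I : V →ₗ[ℝ] V) (Q : Module.Dual ℝ V →ₗ[ℝ] V) :
    ((∀ p : V × Module.Dual ℝ V, Jblock I Q (Jblock I Q p) = -p) ∧
      (∀ p q : V × Module.Dual ℝ V,
        natPairing (Jblock I Q p) (Jblock I Q q) = natPairing p q))
    ↔ ((∀ x : V, I (I x) = -x) ∧
        (∀ ξ : Module.Dual ℝ V, I (Q ξ) = Q (LinearMap.comp ξ I)) ∧
        (∀ ξ η : Module.Dual ℝ V, ξ (Q η) = -η (Q ξ))) := by
  constructor
  · rintro ⟨hsq, hpair⟩
    have h1 : ∀ x : V, I (I x) = -x := by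
      intro x
      have := hsq (x, 0)
      simpa [Jblock, Prod.ext_iff] using this
    have h2 : ∀ ξ : Module.Dual ℝ V, I (Q ξ) = Q (LinearMap.comp ξ I) := by
      intro ξ
      have := hsq (0, ξ)
      simp [Jblock, Prod.ext_iff] at this
      have h := this.1
      rwa [neg_add_eq_zero] at h
    refine ⟨h1, h2, ?_⟩
    have key : ∀ ξ η : Module.Dual ℝ V,
        ξ (Q (LinearMap.comp η I)) + η (Q (LinearMap.comp ξ I)) = 0 := by
      intro ξ η
      have := hpair (0, ξ) (0, η)
      simp [Jblock, natPairing, h2] at this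
      linarith
    intro ξ η
    have hII : LinearMap.comp (-(LinearMap.comp η I)) I = η := by
      ext v
      simp [h1 v]
    have hkey := key ξ (-(LinearMap.comp η I))
    rw [hII] at hkey
    have hcomp : LinearMap.comp (LinearMap.comp ξ I) I = -ξ := by
      ext v
      simp [h1 v]
    have hval : (-(LinearMap.comp η I)) (Q (LinearMap.comp ξ I)) = η (Q ξ) := by
      simp [← h2 (LinearMap.comp ξ I), ← h2 ξ, h1]
    rw [hval] at hkey
    linarith
  · rintro ⟨h1, h2, h3⟩
    constructor
    · rintro ⟨x, ξ⟩
      ext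
      · simp [Jblock, h1, h2]
      · simp [Jblock, h1]
    · rintro ⟨x, ξ⟩ ⟨y, η⟩
      simp [Jblock, natPairing, h1, h2]
      have hv : ξ (Q (LinearMap.comp η I)) = -η (Q (LinearMap.comp ξ I)) := by
        rw [h3 ξ (LinearMap.comp η I)]
        simp [← h2 ξ]
      linarith
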